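/- Let {ρ^x}_{x∈X} be a finite family of d×d density matrices that pairwise commute: [ρ^x, ρ^{x'}] = 0 for all x, x'. Then there exists a single orthonormal basis simultaneously diagonalizing all ρ^x, and the projective measurement {P_i = |i⟩⟨i|} in this basis achieves ∑_i max_x Tr(ρ^x P_i) = sup over all POVMs {F_y} of ∑_y max_x Tr(ρ^x F_y). -/

import Mathlib

open Matrix Finset ComplexOrder

set_option maxHeartbeats 1000000 in
open Module.End in
lemma simultaneous_diag_aux
    (d : ℕ) (X : Type) [Fintype X]
    (ρ : X → Matrix (Fin d) (Fin d) ℂ)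
    (hherm : ∀ x, (ρ x).IsHermitian)
    (hcomm : ∀ x x', ρ x * ρ x' = ρ x' * ρ x) :
    ∃ (b : OrthonormalBasis (Fin d) ℂ (EuclideanSpace ℂ (Fin d))) (μ : Fin d → X → ℂ),
      ∀ j x, Matrix.toEuclideanLin (ρ x) (b j) = μ j x • b j := by
  classical
  set T : X → Module.End ℂ (EuclideanSpace ℂ (Fin d)) :=
    fun x => Matrix.toEuclideanLin (ρ x) with hT
  have hsym : ∀ x, (T x).IsSymmetric := fun x =>
    Matrix.isHermitian_iff_isSymmetric.mp (hherm x)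
  have hcommT : Pairwise (Function.onFun Commute T) := by
    intro x x' _
    show T x * T x' = T x' * T x
    ext v
    simp only [Module.End.mul_apply, hT, Matrix.toEuclideanLin_apply,
      Equiv.apply_symm_apply, Matrix.mulVec_mulVec, hcomm x x']
  set V : (X → ℂ) → Submodule ℂ (EuclideanSpace ℂ (Fin d)) :=
    fun α => ⨅ x, eigenspace (T x) (α x) with hV
  have hInt : DirectSum.IsInternal V :=
    LinearMap.IsSymmetric.LinearMap.IsSymmetric.directSum_isInternal_of_pairwise_commute hsym hcommT
  have hOrth := LinearMap.IsSymmetric.orthogonalFamily_iInf_eigenspaces hsym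
  have hind : iSupIndep V :=
    ((DirectSum.isInternal_submodule_iff_iSupIndep_and_iSup_eq_top V).mp hInt).1
  letI : Fintype {α : X → ℂ // V α ≠ ⊥} := hind.fintypeNeBotOfFiniteDimensional
  have hInt' : DirectSum.IsInternal (fun i : {α : X → ℂ // V α ≠ ⊥} => V i.val) :=
    DirectSum.isInternal_ne_bot_iff.mpr hInt
  have hOrth' := hOrth.comp
    (Subtype.coe_injective : Function.Injective (fun i : {α : X → ℂ // V α ≠ ⊥} => i.val))
  let b0 := hInt'.collectedOrthonormalBasis hOrth'
    (fun i => stdOrthonormalBasis ℂ (V i.val))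
  have hcard : Fintype.card
      (Σ i : {α : X → ℂ // V α ≠ ⊥}, Fin (Module.finrank ℂ (V i.val))) = d := by
    have h1 := Module.finrank_eq_card_basis b0.toBasis
    have h2 : Module.finrank ℂ (EuclideanSpace ℂ (Fin d)) = d :=
      finrank_euclideanSpace_fin
    omega
  let e := Fintype.equivFinOfCardEq hcard
  refine ⟨b0.reindex e, fun j => (e.symm j).1.val, fun j x => ?_⟩
  have hb : b0.reindex e j ∈ V ((e.symm j).1.val) := by
    rw [OrthonormalBasis.coe_reindex]
    exact hInt'.collectedOrthonormalBasis_mem hOrth' _ (e.symm j)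
  have : b0.reindex e j ∈ eigenspace (T x) ((e.symm j).1.val x) :=
    (Submodule.mem_iInf _).mp hb x
  exact mem_eigenspace_iff.mp this

lemma diag_entry_nonneg {n : Type*} [Fintype n] [DecidableEq n]
    {M : Matrix n n ℂ} (hM : M.PosSemidef) (j : n) : 0 ≤ M j j := by
  exact hM.diag_nonneg

lemma std_diag (d : ℕ) (i : Fin d) :
    Matrix.single i i (1:ℂ) = Matrix.diagonal (Pi.single i 1) := by
  ext a b
  simp only [Matrix.single, Matrix.of_apply, Matrix.diagonal_apply, Pi.single_apply]
  by_cases h1 : a = b <;> by_cases h2 : i = a <;> simp_all [eq_comm]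

lemma sum_std (d : ℕ) : ∑ i : Fin d, Matrix.single i i (1:ℂ) = 1 := by
  have : ∑ i : Fin d, Matrix.diagonal (Pi.single i (1:ℂ)) =
      Matrix.diagonal (∑ i : Fin d, Pi.single i (1:ℂ)) := by
    ext a b
    by_cases h : a = b <;> simp [Matrix.sum_apply, Matrix.diagonal_apply, h, Finset.sum_apply]
  rw [Finset.sum_congr rfl (fun i _ => std_diag d i), this]
  have h1 : (∑ i : Fin d, Pi.single i (1:ℂ)) = fun _ => 1 := by
    funext j
    simp [Finset.sum_apply, Pi.single_apply]
  rw [h1]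
  rfl

set_option maxHeartbeats 1000000 in
theorem commuting_ensemble_projective_optimal
    (d : ℕ) (hd : 1 ≤ d) (X : Type) [Fintype X] [Nonempty X]
    (ρ : X → Matrix (Fin d) (Fin d) ℂ)
    (hρ : ∀ x, (ρ x).PosSemidef ∧ (ρ x).trace = 1)
    (hcomm : ∀ x x', ρ x * ρ x' = ρ x' * ρ x) :
    ∃ U : Matrix (Fin d) (Fin d) ℂ, Uᴴ * U = 1 ∧ U * Uᴴ = 1 ∧
      (∀ x, ∃ D : Fin d → ℂ, Uᴴ * ρ x * U = Matrix.diagonal D) ∧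
      IsGreatest
        {s : ℝ | ∃ (m : ℕ) (_ : 0 < m) (F : Fin m → Matrix (Fin d) (Fin d) ℂ),
          (∀ y, (F y).PosSemidef) ∧ (∑ y, F y = 1) ∧
          s = ∑ y, (Finset.univ.sup' Finset.univ_nonempty
            (fun x => (Matrix.trace (ρ x * F y)).re))}
        (∑ i : Fin d, (Finset.univ.sup' Finset.univ_nonempty
          (fun x => (Matrix.trace (ρ x * (U * Matrix.single i i 1 * Uᴴ))).re))) := by
  classical
  obtain ⟨b, μ, hbμ⟩ := simultaneous_diag_aux d X ρ (fun x => (hρ x).1.isHermitian) hcomm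
  set U : Matrix (Fin d) (Fin d) ℂ := Matrix.of (fun i j => b j i) with hU
  -- mulVec action of ρ x on columns of U
  have key : ∀ (j : Fin d) (x : X) (i : Fin d),
      (∑ k, ρ x i k * b j k) = μ j x * b j i := by
    intro j x i
    have h := congrArg (fun v => (WithLp.equiv 2 (Fin d → ℂ)) v i) (hbμ j x)
    simpa [Matrix.toEuclideanLin_apply, Matrix.mulVec, dotProduct] using h
  -- unitarity
  have hinner : ∀ j k : Fin d, (∑ i, (starRingEnd ℂ) (b j i) * b k i)
      = if j = k then 1 else 0 := by
    intro j k
    have h := orthonormal_iff_ite.mp b.orthonormal j k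
    simpa [PiLp.inner_apply, RCLike.inner_apply, mul_comm] using h
  have hUU : Uᴴ * U = 1 := by
    ext j k
    simp only [Matrix.mul_apply, Matrix.conjTranspose_apply, hU, Matrix.of_apply,
      Matrix.one_apply, RCLike.star_def]
    exact hinner j k
  have hUUT : U * Uᴴ = 1 := mul_eq_one_comm.mp hUU
  -- diagonalization
  have hρU : ∀ x, ρ x * U = U * Matrix.diagonal (fun j => μ j x) := by
    intro x
    ext i j
    rw [Matrix.mul_apply, Matrix.mul_diagonal]
    simpa [hU, mul_comm] using key j x i
  have hdiag : ∀ x, Uᴴ * ρ x * U = Matrix.diagonal (fun j => μ j x) := by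
    intro x
    calc Uᴴ * ρ x * U = Uᴴ * (ρ x * U) := by rw [Matrix.mul_assoc]
    _ = Uᴴ * (U * Matrix.diagonal (fun j => μ j x)) := by rw [hρU x]
    _ = (Uᴴ * U) * Matrix.diagonal (fun j => μ j x) := by rw [Matrix.mul_assoc]
    _ = Matrix.diagonal (fun j => μ j x) := by rw [hUU, Matrix.one_mul]
  have hρeq : ∀ x, ρ x = U * Matrix.diagonal (fun j => μ j x) * Uᴴ := by
    intro x
    rw [← hρU x]
    calc ρ x = ρ x * (U * Uᴴ) := by rw [hUUT, Matrix.mul_one]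
    _ = ρ x * U * Uᴴ := by rw [Matrix.mul_assoc]
  -- reality and nonnegativity of eigenvalues
  have hμnn : ∀ x j, 0 ≤ μ j x := by
    intro x j
    have hpsd : (Uᴴ * ρ x * U).PosSemidef := by
      have := (hρ x).1.conjTranspose_mul_mul_same (B := U)
      simpa using this
    have := diag_entry_nonneg hpsd j
    rwa [hdiag x, Matrix.diagonal_apply_eq] at this
  have hμre : ∀ x j, μ j x = ((μ j x).re : ℂ) := by
    intro x j
    have h := hμnn x j
    rw [Complex.le_def] at h
    exact (Complex.ext (by simp) (by simp [← h.2])).symm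
  -- trace formula for general F
  have htr : ∀ (x : X) (F : Matrix (Fin d) (Fin d) ℂ),
      (ρ x * F).trace = ∑ i, (Uᴴ * F * U) i i * μ i x := by
    intro x F
    calc (ρ x * F).trace = ((U * Matrix.diagonal (fun j => μ j x)) * (Uᴴ * F)).trace := by
          rw [hρeq x]; rw [Matrix.mul_assoc, Matrix.mul_assoc]
    _ = ((Uᴴ * F) * (U * Matrix.diagonal (fun j => μ j x))).trace := Matrix.trace_mul_comm _ _
    _ = ((Uᴴ * F * U) * Matrix.diagonal (fun j => μ j x)).trace := by
          rw [← Matrix.mul_assoc]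
    _ = ∑ i, (Uᴴ * F * U) i i * μ i x := by
          simp [Matrix.trace, Matrix.diag, Matrix.mul_diagonal]
  -- trace of projectors
  have hUPU : ∀ i : Fin d, Uᴴ * (U * Matrix.single i i 1 * Uᴴ) * U
      = Matrix.single i i 1 := by
    intro i
    calc Uᴴ * (U * Matrix.single i i 1 * Uᴴ) * U
        = (Uᴴ * U) * Matrix.single i i 1 * (Uᴴ * U) := by
          simp only [Matrix.mul_assoc]
    _ = Matrix.single i i 1 := by rw [hUU]; simp
  have htrP : ∀ (x : X) (i : Fin d),
      (ρ x * (U * Matrix.single i i 1 * Uᴴ)).trace = μ i x := by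
    intro x i
    rw [htr x _]
    simp only [hUPU i]
    simp [std_diag, Pi.single_apply, Finset.sum_ite_eq]
  set a : X → Fin d → ℝ := fun x i => (μ i x).re with ha
  have htrPre : ∀ (x : X) (i : Fin d),
      ((ρ x * (U * Matrix.single i i 1 * Uᴴ)).trace).re = a x i := by
    intro x i; rw [htrP x i]
  refine ⟨U, hUU, hUUT, fun x => ⟨fun j => μ j x, hdiag x⟩, ?_, ?_⟩
  · -- membership
    refine ⟨d, lt_of_lt_of_le one_pos hd,
      fun i => U * Matrix.single i i 1 * Uᴴ, fun i => ?_, ?_, rfl⟩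
    · apply Matrix.PosSemidef.mul_mul_conjTranspose_same _ U
      rw [std_diag]
      refine Matrix.posSemidef_diagonal_iff.mpr fun k => ?_
      rw [Pi.single_apply]
      split <;> simp
    · have : ∑ i : Fin d, U * Matrix.single i i 1 * Uᴴ
          = U * (∑ i : Fin d, Matrix.single i i 1) * Uᴴ := by
        simp only [Finset.mul_sum, Finset.sum_mul]
      rw [this, sum_std, Matrix.mul_one, hUUT]
  · -- upper bound
    rintro s ⟨m, hm, F, hFpsd, hFsum, rfl⟩
    set G : Fin m → Fin d → ℝ := fun y i => ((Uᴴ * F y * U) i i).re with hG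
    have hGnn : ∀ y i, 0 ≤ G y i := by
      intro y i
      have hpsd : (Uᴴ * F y * U).PosSemidef := by
        have := (hFpsd y).conjTranspose_mul_mul_same (B := U)
        simpa using this
      have := diag_entry_nonneg hpsd i
      rw [Complex.le_def] at this
      simpa using this.1
    have hGsum : ∀ i, ∑ y, G y i = 1 := by
      intro i
      have h1 : ∑ y, (Uᴴ * F y * U) = Uᴴ * (∑ y, F y) * U := by
        simp only [Finset.mul_sum, Finset.sum_mul]
      have h2 : (∑ y, (Uᴴ * F y * U)) i i = 1 := by
        rw [h1, hFsum, Matrix.mul_one, hUU, Matrix.one_apply_eq]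
      have h3 : (∑ y, (Uᴴ * F y * U)) i i = ∑ y, (Uᴴ * F y * U) i i := by
        simp [Matrix.sum_apply]
      rw [h3] at h2
      calc ∑ y, G y i = (∑ y, (Uᴴ * F y * U) i i).re := by
            simp [hG, Complex.re_sum]
      _ = 1 := by rw [h2]; simp
    have htrF : ∀ x y, ((ρ x * F y).trace).re = ∑ i, a x i * G y i := by
      intro x y
      rw [htr x (F y)]
      rw [Complex.re_sum]
      refine Finset.sum_congr rfl fun i _ => ?_
      rw [Complex.mul_re]
      have him : (μ i x).im = 0 := by
        have h := hμnn x i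
        rw [Complex.le_def] at h
        simp [← h.2]
      rw [him]
      simp [ha, hG, mul_comm]
    have H : ∑ y, Finset.univ.sup' Finset.univ_nonempty (fun x => ((ρ x * F y).trace).re)
        ≤ ∑ i : Fin d, (Finset.univ.sup' Finset.univ_nonempty
          (fun x => ((ρ x * (U * Matrix.single i i 1 * Uᴴ)).trace).re)) :=
      calc ∑ y, Finset.univ.sup' Finset.univ_nonempty (fun x => ((ρ x * F y).trace).re)
          ≤ ∑ y, ∑ i, (Finset.univ.sup' Finset.univ_nonempty (fun x => a x i)) * G y i := by
            refine Finset.sum_le_sum fun y _ => ?_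
            refine Finset.sup'_le _ _ fun x _ => ?_
            rw [htrF x y]
            refine Finset.sum_le_sum fun i _ => ?_
            exact mul_le_mul_of_nonneg_right
              (Finset.le_sup' (fun x => a x i) (Finset.mem_univ x)) (hGnn y i)
      _ = ∑ i, (Finset.univ.sup' Finset.univ_nonempty (fun x => a x i)) * ∑ y, G y i := by
            rw [Finset.sum_comm]
            simp [Finset.mul_sum]
      _ = ∑ i, (Finset.univ.sup' Finset.univ_nonempty (fun x => a x i)) := by
            simp [hGsum]
      _ = ∑ i : Fin d, (Finset.univ.sup' Finset.univ_nonempty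
            (fun x => ((ρ x * (U * Matrix.single i i 1 * Uᴴ)).trace).re)) := by
            refine Finset.sum_congr rfl fun i _ => ?_
            refine Finset.sup'_congr _ rfl fun x _ => (htrPre x i).symm
    exact H
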